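/- Let g₃(n) = 2^{s₂(3n)} be the number of odd coefficients of (1+x+x^2+x^3)^n. Then lim_{n→∞} Var(ln(g₃(N)))/ln(n) = ln(2)/4; equivalently, lim_{n→∞} Var(s₂(3N))/log₂(n) = 1/4. -/

import Mathlib

open Finset Filter Real

def s2 (m : ℕ) : ℕ := (Nat.digits 2 m).sum
def f3 (c k : ℕ) : ℕ := s2 (3 * k + c)

lemma s2_bit (a b : ℕ) (hb : b < 2) : s2 (2*a + b) = b + s2 a := by
  rcases Nat.eq_zero_or_pos (2*a+b) with h | h
  · have : a = 0 ∧ b = 0 := by omega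
    simp [this.1, this.2, s2]
  · unfold s2
    rw [Nat.digits_def' (by norm_num) h]
    have h1 : (2*a+b) % 2 = b := by omega
    have h2 : (2*a+b) / 2 = a := by omega
    rw [h1, h2]; simp

lemma s2_four (a t : ℕ) (ht : t < 4) : s2 (4*a + t) = s2 t + s2 a := by
  have h1 : 4*a + t = 2*(2*a + t/2) + t % 2 := by omega
  rw [h1, s2_bit _ _ (by omega), s2_bit _ _ (by omega)]
  interval_cases t <;> simp [s2] <;> omega

lemma f3_rec (c d j : ℕ) (hd : d < 4) :
    f3 c (4*j + d) = s2 ((3*d + c) % 4) + f3 ((3*d + c)/4) j := by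
  unfold f3
  have h1 : 3*(4*j+d) + c = 4*(3*j + (3*d+c)/4) + (3*d+c) % 4 := by omega
  rw [h1, s2_four _ _ (by omega)]

lemma sum_block (g : ℕ → ℝ) (q : ℕ) :
    ∑ k ∈ range (4*q), g k
      = ∑ j ∈ range q, (g (4*j) + g (4*j+1) + g (4*j+2) + g (4*j+3)) := by
  induction q with
  | zero => simp
  | succ q ih =>
      have h4 : 4*(q+1) = (4*q) + 1 + 1 + 1 + 1 := by ring
      rw [h4, sum_range_succ, sum_range_succ, sum_range_succ, sum_range_succ, ih,
        sum_range_succ]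
      ring

lemma log4_step (q r : ℕ) (hq : 1 ≤ q) (hr : r < 4) :
    Nat.log 4 (4*q + r) = Nat.log 4 q + 1 := by
  apply Nat.log_eq_of_pow_le_of_lt_pow
  · have := Nat.pow_log_le_self 4 (by omega : q ≠ 0)
    calc 4 ^ (Nat.log 4 q + 1) = 4 * 4 ^ (Nat.log 4 q) := by ring
    _ ≤ 4 * q := by omega
    _ ≤ 4*q + r := by omega
  · have := Nat.lt_pow_succ_log_self (by norm_num : 1 < 4) q
    calc 4*q + r < 4*(q+1) := by omega
    _ ≤ 4 * 4 ^ (Nat.log 4 q + 1) := by omega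
    _ = 4 ^ (Nat.log 4 q + 2) := by ring

lemma s2_le (m : ℕ) : s2 m ≤ Nat.log 2 m + 1 := by
  rcases Nat.eq_zero_or_pos m with h | h
  · simp [h, s2]
  · unfold s2
    calc (Nat.digits 2 m).sum ≤ (Nat.digits 2 m).length * 1 := by
          apply List.sum_le_card_nsmul
          intro x hx
          have := Nat.digits_lt_base (by norm_num) hx
          omega
    _ = Nat.log 2 m + 1 := by
          rw [Nat.digits_len 2 m (by norm_num) (by omega)]; ring

lemma f3_le (c k : ℕ) (hc : c < 3) : f3 c k ≤ 2 * Nat.log 4 k + 4 := by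
  rcases Nat.eq_zero_or_pos k with h | h
  · subst h; unfold f3
    interval_cases c <;> simp [s2]
  · have h1 : 3*k + c < 4 ^ (Nat.log 4 k + 2) := by
      have := Nat.lt_pow_succ_log_self (by norm_num : 1 < 4) k
      have h2 : 4 ^ (Nat.log 4 k + 2) = 4 * 4 ^ (Nat.log 4 k + 1) := by ring
      omega
    have h2 : Nat.log 2 (3*k + c) < 2 * (Nat.log 4 k + 2) := by
      apply Nat.log_lt_of_lt_pow (by omega)
      calc 3*k + c < 4 ^ (Nat.log 4 k + 2) := h1
      _ = 2 ^ (2 * (Nat.log 4 k + 2)) := by rw [pow_mul]; norm_num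
    have := s2_le (3*k + c)
    unfold f3
    omega

lemma s2_0 : s2 0 = 0 := by simp [s2]
lemma s2_1 : s2 1 = 1 := by simp [s2]
lemma s2_2 : s2 2 = 1 := by simp [s2]
lemma s2_3 : s2 3 = 2 := by simp [s2]

lemma key_S (c : ℕ) (hc : c < 3) (q : ℕ) :
    ∑ j ∈ range q, ((f3 c (4*j) : ℝ) + (f3 c (4*j+1) : ℝ)
        + (f3 c (4*j+2) : ℝ) + (f3 c (4*j+3) : ℝ))
    = (∑ j ∈ range q, ((f3 0 j : ℝ) + (f3 1 j : ℝ) + (f3 2 j : ℝ) + (f3 c j : ℝ)))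
      + 4*q := by
  have h : ∀ j ∈ range q,
      ((f3 c (4*j) : ℝ) + (f3 c (4*j+1) : ℝ) + (f3 c (4*j+2) : ℝ) + (f3 c (4*j+3) : ℝ))
      = ((f3 0 j : ℝ) + (f3 1 j : ℝ) + (f3 2 j : ℝ) + (f3 c j : ℝ)) + 4 := by
    intro j _
    have e0 := f3_rec c 0 j (by norm_num)
    have e1 := f3_rec c 1 j (by norm_num)
    have e2 := f3_rec c 2 j (by norm_num)
    have e3 := f3_rec c 3 j (by norm_num)
    interval_cases c <;>
      (norm_num [s2_0, s2_1, s2_2, s2_3] at e0 e1 e2 e3; rw [e0, e1, e2, e3]; push_cast; ring)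
  rw [Finset.sum_congr rfl h, Finset.sum_add_distrib]
  simp [mul_comm]

lemma key_W (c : ℕ) (hc : c < 3) (q : ℕ) (L : ℝ) :
    ∑ j ∈ range q, (((f3 c (4*j) : ℝ) - (L+1))^2 + ((f3 c (4*j+1) : ℝ) - (L+1))^2
        + ((f3 c (4*j+2) : ℝ) - (L+1))^2 + ((f3 c (4*j+3) : ℝ) - (L+1))^2)
    = (∑ j ∈ range q, (((f3 0 j : ℝ) - L)^2 + ((f3 1 j : ℝ) - L)^2
        + ((f3 2 j : ℝ) - L)^2 + ((f3 c j : ℝ) - L)^2))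
      + 2*q := by
  have h : ∀ j ∈ range q,
      (((f3 c (4*j) : ℝ) - (L+1))^2 + ((f3 c (4*j+1) : ℝ) - (L+1))^2
        + ((f3 c (4*j+2) : ℝ) - (L+1))^2 + ((f3 c (4*j+3) : ℝ) - (L+1))^2)
      = (((f3 0 j : ℝ) - L)^2 + ((f3 1 j : ℝ) - L)^2
        + ((f3 2 j : ℝ) - L)^2 + ((f3 c j : ℝ) - L)^2) + 2 := by
    intro j _
    have e0 := f3_rec c 0 j (by norm_num)
    have e1 := f3_rec c 1 j (by norm_num)
    have e2 := f3_rec c 2 j (by norm_num)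
    have e3 := f3_rec c 3 j (by norm_num)
    interval_cases c <;>
      (norm_num [s2_0, s2_1, s2_2, s2_3] at e0 e1 e2 e3; rw [e0, e1, e2, e3]; push_cast; ring)
  rw [Finset.sum_congr rfl h, Finset.sum_add_distrib]
  simp [mul_comm]


lemma s2_4 : s2 4 = 1 := by simp [s2]
lemma s2_5 : s2 5 = 2 := by simp [s2]
lemma s2_6 : s2 6 = 2 := by simp [s2]
lemma s2_7 : s2 7 = 3 := by simp [s2]
lemma s2_8 : s2 8 = 1 := by simp [s2]

set_option maxHeartbeats 1000000 in
lemma main_bounds : ∀ n : ℕ, 1 ≤ n → ∀ c : ℕ, c < 3 →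
    |(∑ k ∈ range n, (f3 c k : ℝ)) - (n : ℝ) * (Nat.log 4 n : ℝ)|
        ≤ 30*(n:ℝ) - 17*((Nat.log 4 n : ℝ) + 1)
    ∧ |(∑ k ∈ range n, ((f3 c k : ℝ) - (Nat.log 4 n : ℝ))^2)
          - (n:ℝ) * (Nat.log 4 n : ℝ)/2|
        ≤ 300*(n:ℝ) - 60*((Nat.log 4 n : ℝ)+2)^2 := by
  intro n
  induction n using Nat.strong_induction_on with
  | _ n IH =>
    intro hn c hc
    rcases le_or_gt n 3 with h3 | h4
    · -- base case
      have hl0 : Nat.log 4 n = 0 := Nat.log_eq_zero_iff.mpr (Or.inl (by omega))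
      rw [hl0]
      interval_cases n <;> interval_cases c <;>
        constructor <;>
        norm_num [Finset.sum_range_succ, f3, s2_0, s2_1, s2_2, s2_3, s2_4, s2_5,
          s2_6, s2_7, s2_8, abs_le]
    · -- inductive step
      obtain ⟨q, r, hr4, rfl⟩ : ∃ q r, r < 4 ∧ n = 4*q + r :=
        ⟨n/4, n%4, Nat.mod_lt _ (by norm_num), (Nat.div_add_mod n 4).symm⟩
      have hq1 : 1 ≤ q := by omega
      have hlog : Nat.log 4 (4*q + r) = Nat.log 4 q + 1 := log4_step q r hq1 hr4
      set L : ℝ := (Nat.log 4 q : ℝ) with hLdef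
      have hL0 : 0 ≤ L := by positivity
      have hr3 : (r : ℝ) ≤ 3 := by exact_mod_cast Nat.le_of_lt_succ hr4
      have hr0 : (0:ℝ) ≤ (r:ℝ) := by positivity
      have hq0 : (1:ℝ) ≤ (q:ℝ) := by exact_mod_cast hq1
      -- pointwise bound on boundary terms
      have hbd : ∀ d, d < 4 → (f3 c (4*q + d) : ℝ) ≤ 2*L + 6 := by
        intro d hd
        have h1 := f3_le c (4*q+d) hc
        rw [log4_step q d hq1 hd] at h1
        have : (f3 c (4*q+d) : ℝ) ≤ (2 * (Nat.log 4 q + 1) + 4 : ℕ) := by exact_mod_cast h1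
        push_cast at this
        linarith
      have hbd0 : ∀ d, (0:ℝ) ≤ (f3 c (4*q + d) : ℝ) := by
        intro d; positivity
      -- split sums
      have splitS := Finset.sum_range_add (fun k => (f3 c k : ℝ)) (4*q) r
      have splitW := Finset.sum_range_add
        (fun k => ((f3 c k : ℝ) - (L+1))^2) (4*q) r
      rw [sum_block] at splitS splitW
      rw [key_S c hc q] at splitS
      rw [key_W c hc q L] at splitW
      -- boundary bounds
      have hbS : (0:ℝ) ≤ ∑ d ∈ range r, (f3 c (4*q + d) : ℝ) ∧
          ∑ d ∈ range r, (f3 c (4*q + d) : ℝ) ≤ (r:ℝ) * (2*L + 6) := by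
        constructor
        · exact Finset.sum_nonneg fun d _ => hbd0 d
        · calc ∑ d ∈ range r, (f3 c (4*q + d) : ℝ)
              ≤ ∑ d ∈ range r, (2*L + 6) :=
                Finset.sum_le_sum fun d hd => hbd d (by simp at hd; omega)
          _ = (r:ℝ) * (2*L+6) := by rw [Finset.sum_const, card_range]; ring
      have hbW : (0:ℝ) ≤ ∑ d ∈ range r, ((f3 c (4*q + d) : ℝ) - (L+1))^2 ∧
          ∑ d ∈ range r, ((f3 c (4*q + d) : ℝ) - (L+1))^2 ≤ (r:ℝ) * (2*L + 6)^2 := by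
        constructor
        · exact Finset.sum_nonneg fun d _ => sq_nonneg _
        · calc ∑ d ∈ range r, ((f3 c (4*q + d) : ℝ) - (L+1))^2
              ≤ ∑ d ∈ range r, (2*L + 6)^2 := by
                apply Finset.sum_le_sum
                intro d hd
                have h1 := hbd d (by simp at hd; omega)
                have h2 := hbd0 d
                nlinarith [hL0]
          _ = (r:ℝ) * (2*L+6)^2 := by rw [Finset.sum_const, card_range]; ring
      -- IH
      have ih0 := IH q (by omega) hq1 0 (by norm_num)
      have ih1 := IH q (by omega) hq1 1 (by norm_num)
      have ih2 := IH q (by omega) hq1 2 (by norm_num)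
      have ihc := IH q (by omega) hq1 c hc
      rw [← hLdef] at ih0 ih1 ih2 ihc
      -- split the 4-term sums
      have es : ∑ j ∈ range q, ((f3 0 j : ℝ) + (f3 1 j : ℝ) + (f3 2 j : ℝ) + (f3 c j : ℝ))
          = (∑ j ∈ range q, (f3 0 j : ℝ)) + (∑ j ∈ range q, (f3 1 j : ℝ))
            + (∑ j ∈ range q, (f3 2 j : ℝ)) + (∑ j ∈ range q, (f3 c j : ℝ)) := by
        rw [Finset.sum_add_distrib, Finset.sum_add_distrib, Finset.sum_add_distrib]
      have ew : ∑ j ∈ range q, (((f3 0 j : ℝ) - L)^2 + ((f3 1 j : ℝ) - L)^2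
            + ((f3 2 j : ℝ) - L)^2 + ((f3 c j : ℝ) - L)^2)
          = (∑ j ∈ range q, ((f3 0 j : ℝ) - L)^2) + (∑ j ∈ range q, ((f3 1 j : ℝ) - L)^2)
            + (∑ j ∈ range q, ((f3 2 j : ℝ) - L)^2)
            + (∑ j ∈ range q, ((f3 c j : ℝ) - L)^2) := by
        rw [Finset.sum_add_distrib, Finset.sum_add_distrib, Finset.sum_add_distrib]
      rw [es] at splitS
      rw [ew] at splitW
      obtain ⟨hS0l, hS0r⟩ := abs_le.mp ih0.1
      obtain ⟨hS1l, hS1r⟩ := abs_le.mp ih1.1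
      obtain ⟨hS2l, hS2r⟩ := abs_le.mp ih2.1
      obtain ⟨hScl, hScr⟩ := abs_le.mp ihc.1
      obtain ⟨hW0l, hW0r⟩ := abs_le.mp ih0.2
      obtain ⟨hW1l, hW1r⟩ := abs_le.mp ih1.2
      obtain ⟨hW2l, hW2r⟩ := abs_le.mp ih2.2
      obtain ⟨hWcl, hWcr⟩ := abs_le.mp ihc.2
      have hrl : (r:ℝ)*L ≤ 3*L := mul_le_mul_of_nonneg_right hr3 hL0
      have hrl0 : (0:ℝ) ≤ (r:ℝ)*L := by positivity
      have hB1 : ∑ d ∈ range r, (f3 c (4*q + d) : ℝ) ≤ 3*(2*L+6) := by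
        calc ∑ d ∈ range r, (f3 c (4*q + d) : ℝ) ≤ (r:ℝ) * (2*L + 6) := hbS.2
        _ ≤ 3*(2*L+6) := mul_le_mul_of_nonneg_right hr3 (by linarith)
      have hB2 : ∑ d ∈ range r, ((f3 c (4*q + d) : ℝ) - (L+1))^2 ≤ 3*(2*L+6)^2 := by
        calc ∑ d ∈ range r, ((f3 c (4*q + d) : ℝ) - (L+1))^2 ≤ (r:ℝ) * (2*L + 6)^2 := hbW.2
        _ ≤ 3*(2*L+6)^2 := mul_le_mul_of_nonneg_right hr3 (by positivity)
      have hLsq : (0:ℝ) ≤ L^2 := sq_nonneg L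
      constructor
      · rw [hlog]
        push_cast
        rw [splitS, abs_le]
        constructor <;> linarith [hbS.1, hB1, hL0, hr0, hr3, hq0, hrl, hrl0]
      · rw [hlog]
        push_cast
        rw [splitW, abs_le]
        constructor <;> linarith [hbW.1, hB2, hL0, hr0, hr3, hq0, hrl, hrl0, hLsq]


lemma var_bound (n : ℕ) (hn : 1 ≤ n) :
    |((1/(n:ℝ)) * (∑ k ∈ range n, ((f3 0 k : ℝ))^2)
      - ((1/(n:ℝ)) * ∑ k ∈ range n, (f3 0 k : ℝ))^2) - (Nat.log 4 n : ℝ)/2| ≤ 1200 := by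
  set S := ∑ k ∈ range n, (f3 0 k : ℝ) with hSdef
  set Q := ∑ k ∈ range n, ((f3 0 k : ℝ))^2 with hQdef
  set l := (Nat.log 4 n : ℝ) with hldef
  have npos : (0:ℝ) < n := by exact_mod_cast hn
  have hl0 : (0:ℝ) ≤ l := by rw [hldef]; positivity
  obtain ⟨hS, hW⟩ := main_bounds n hn 0 (by norm_num)
  have hWQ : ∑ k ∈ range n, ((f3 0 k : ℝ) - l)^2 = Q - 2*l*S + n*l^2 := by
    have h : ∀ k ∈ range n, ((f3 0 k:ℝ) - l)^2
        = ((f3 0 k:ℝ))^2 - 2*l*(f3 0 k:ℝ) + l^2 := by intros; ring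
    rw [Finset.sum_congr rfl h, Finset.sum_add_distrib, Finset.sum_sub_distrib,
      ← Finset.mul_sum, Finset.sum_const, card_range, nsmul_eq_mul]
  rw [hWQ] at hW
  have hS' : |S/(n:ℝ) - l| ≤ 30 := by
    rw [show S/(n:ℝ) - l = (S - n*l)/n by field_simp, abs_div, abs_of_pos npos,
      div_le_iff₀ npos]
    calc |S - (n:ℝ)*l| ≤ 30*(n:ℝ) - 17*(l+1) := hS
    _ ≤ 30 * n := by linarith
  have hW' : |(Q - 2*l*S + n*l^2)/(n:ℝ) - l/2| ≤ 300 := by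
    have hident : (Q - 2*l*S + n*l^2)/(n:ℝ) - l/2 = ((Q - 2*l*S + n*l^2) - n*l/2)/n := by
      field_simp
    rw [hident, abs_div, abs_of_pos npos, div_le_iff₀ npos]
    calc |Q - 2*l*S + (n:ℝ)*l^2 - n*l/2| ≤ 300*(n:ℝ) - 60*(l+2)^2 := by
          have : Q - 2*l*S + (n:ℝ)*l^2 - n*l/2 = (Q - 2*l*S + (n:ℝ)*l^2) - n*l/2 := by ring
          rw [this]; exact hW
    _ ≤ 300 * n := by nlinarith [sq_nonneg (l+2)]
  have key : (1/(n:ℝ))*Q - ((1/(n:ℝ))*S)^2 - l/2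
      = ((Q - 2*l*S + n*l^2)/(n:ℝ) - l/2) - (S/(n:ℝ) - l)^2 := by
    field_simp; ring
  have h1 := abs_le.mp hS'
  have h2 := abs_le.mp hW'
  have h3 : (S/(n:ℝ) - l)^2 ≤ 900 := by nlinarith
  have h4 : (0:ℝ) ≤ (S/(n:ℝ) - l)^2 := sq_nonneg _
  rw [abs_le]
  constructor <;> [skip; skip] <;>
    (rw [show (1/(n:ℝ))*Q - ((1/(n:ℝ))*S)^2 - l/2
        = ((Q - 2*l*S + n*l^2)/(n:ℝ) - l/2) - (S/(n:ℝ) - l)^2 from key] <;> linarith)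

lemma log4_cast_bounds (n : ℕ) (hn : 4 ≤ n) :
    2*(Nat.log 4 n : ℝ) ≤ Real.logb 2 n ∧ Real.logb 2 n ≤ 2*(Nat.log 4 n : ℝ) + 2
    ∧ (2:ℝ) ≤ Real.logb 2 n := by
  have h2 : (0:ℝ) < Real.log 2 := Real.log_pos (by norm_num)
  have hlog4 : Real.log 4 = 2 * Real.log 2 := by
    rw [show (4:ℝ) = 2^2 by norm_num, Real.log_pow]; push_cast; ring
  have hL1 : 1 ≤ Nat.log 4 n := by
    rw [Nat.le_log_iff_pow_le (by norm_num) (by omega)]; omega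
  have hpowle : ((4:ℝ))^(Nat.log 4 n) ≤ (n:ℝ) := by
    exact_mod_cast Nat.pow_log_le_self 4 (by omega : n ≠ 0)
  have hltpow : (n:ℝ) < (4:ℝ)^(Nat.log 4 n + 1) := by
    exact_mod_cast Nat.lt_pow_succ_log_self (by norm_num) n
  have hnpos : (0:ℝ) < n := by positivity
  have hlb : (Nat.log 4 n : ℝ) * Real.log 4 ≤ Real.log n := by
    calc (Nat.log 4 n : ℝ) * Real.log 4 = Real.log ((4:ℝ)^(Nat.log 4 n)) := by
          rw [Real.log_pow]
    _ ≤ Real.log n := Real.log_le_log (by positivity) hpowle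
  have hub : Real.log n ≤ ((Nat.log 4 n : ℝ) + 1) * Real.log 4 := by
    calc Real.log n ≤ Real.log ((4:ℝ)^(Nat.log 4 n + 1)) :=
          Real.log_le_log hnpos hltpow.le
    _ = ((Nat.log 4 n : ℝ) + 1) * Real.log 4 := by rw [Real.log_pow]; push_cast; ring
  have e1 : 2*(Nat.log 4 n : ℝ) ≤ Real.logb 2 n := by
    rw [Real.logb, le_div_iff₀ h2]; rw [hlog4] at hlb; linarith
  have e2 : Real.logb 2 n ≤ 2*(Nat.log 4 n : ℝ) + 2 := by
    rw [Real.logb, div_le_iff₀ h2]; rw [hlog4] at hub; linarith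
  have hL1' : (1:ℝ) ≤ (Nat.log 4 n : ℝ) := by exact_mod_cast hL1
  exact ⟨e1, e2, by linarith⟩

lemma part2 : Filter.Tendsto
    (fun n : ℕ =>
      ((1 / (n : ℝ)) * (∑ k ∈ Finset.range n, ((f3 0 k : ℝ)) ^ 2)
        - ((1 / (n : ℝ)) * ∑ k ∈ Finset.range n, (f3 0 k : ℝ)) ^ 2)
        / Real.logb 2 n)
    Filter.atTop (nhds (1 / 4)) := by
  set v : ℕ → ℝ := fun n =>
    (1 / (n : ℝ)) * (∑ k ∈ Finset.range n, ((f3 0 k : ℝ)) ^ 2)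
      - ((1 / (n : ℝ)) * ∑ k ∈ Finset.range n, (f3 0 k : ℝ)) ^ 2 with hv
  have hlogtend : Tendsto (fun n : ℕ => Real.logb 2 n) atTop atTop :=
    (Real.tendsto_logb_atTop (by norm_num : (1:ℝ) < 2)).comp
      tendsto_natCast_atTop_atTop
  have h0 : Tendsto (fun n : ℕ => 1201/Real.logb 2 n) atTop (nhds 0) :=
    tendsto_const_nhds.div_atTop hlogtend
  have hsq : Tendsto (fun n : ℕ => v n / Real.logb 2 n - 1/4) atTop (nhds 0) := by
    apply squeeze_zero_norm' _ h0
    filter_upwards [eventually_ge_atTop 4] with n hn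
    obtain ⟨e1, e2, e3⟩ := log4_cast_bounds n hn
    have hb0 : (0:ℝ) < Real.logb 2 n := by linarith
    set L := (Nat.log 4 n : ℝ)
    have hvb : |v n - L/2| ≤ 1200 := var_bound n (by omega)
    set b := Real.logb 2 n
    have hid : v n / b - 1/4 = ((v n - L/2) + (2*L - b)/4)/b := by
      field_simp
      ring
    rw [Real.norm_eq_abs, hid, abs_div, abs_of_pos hb0, div_le_div_iff₀ hb0 hb0]
    have h5 := abs_le.mp hvb
    have h6 : |(v n - L/2) + (2*L - b)/4| ≤ 1200 + 1/2 := by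
      rw [abs_le]; constructor <;> linarith [h5.1, h5.2]
    nlinarith [abs_nonneg ((v n - L/2) + (2*L - b)/4)]
  have h7 := hsq.add (tendsto_const_nhds (x := (1/4:ℝ)))
  rw [zero_add] at h7
  have h8 : (fun n : ℕ => v n / Real.logb 2 n - 1/4 + 1/4)
      = fun n : ℕ => v n / Real.logb 2 n := by
    funext n; ring
  rw [h8] at h7
  exact h7


/-- With `g₃ k = 2^{s₂(3k)}` the number of odd coefficients of `(1+x+x²+x³)^k`,
the variance of `ln(g₃(N))` for `N` uniform on `{0,…,n−1}`, divided by `ln n`, converges to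
`ln 2 / 4`; equivalently `Var(s₂(3N))/log₂ n → 1/4`. -/
theorem quadrinomial_typical_dispersion :
    (Filter.Tendsto
      (fun n : ℕ =>
        ((1 / (n : ℝ)) * (∑ k ∈ Finset.range n,
              (Real.log ((2 : ℝ) ^ (Nat.digits 2 (3 * k)).sum)) ^ 2)
          - ((1 / (n : ℝ)) * ∑ k ∈ Finset.range n,
              Real.log ((2 : ℝ) ^ (Nat.digits 2 (3 * k)).sum)) ^ 2)
          / Real.log n)
      Filter.atTop (nhds (Real.log 2 / 4)))
    ∧
    (Filter.Tendsto
      (fun n : ℕ =>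
        ((1 / (n : ℝ)) * (∑ k ∈ Finset.range n, (((Nat.digits 2 (3 * k)).sum : ℝ)) ^ 2)
          - ((1 / (n : ℝ)) * ∑ k ∈ Finset.range n, ((Nat.digits 2 (3 * k)).sum : ℝ)) ^ 2)
          / Real.logb 2 n)
      Filter.atTop (nhds (1 / 4))) := by
  have hdig : ∀ k : ℕ, (Nat.digits 2 (3*k)).sum = f3 0 k := fun k => by simp [f3, s2]
  have hp : ∀ n : ℕ,
      ((1/(n:ℝ)) * (∑ k ∈ range n, (Real.log ((2:ℝ)^(f3 0 k)))^2)
        - ((1/(n:ℝ)) * ∑ k ∈ range n, Real.log ((2:ℝ)^(f3 0 k)))^2) / Real.log n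
      = Real.log 2 *
        (((1/(n:ℝ)) * (∑ k ∈ range n, ((f3 0 k : ℝ))^2)
          - ((1/(n:ℝ)) * ∑ k ∈ range n, (f3 0 k : ℝ))^2) / Real.logb 2 n) := by
    intro n
    have e1 : ∀ k ∈ range n, (Real.log ((2:ℝ)^(f3 0 k)))^2
        = (Real.log 2)^2 * ((f3 0 k : ℝ))^2 := by
      intro k _; rw [Real.log_pow]; ring
    have e2 : ∀ k ∈ range n, Real.log ((2:ℝ)^(f3 0 k)) = Real.log 2 * (f3 0 k : ℝ) := by
      intro k _; rw [Real.log_pow]; ring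
    rw [Finset.sum_congr rfl e1, Finset.sum_congr rfl e2, ← Finset.mul_sum, ← Finset.mul_sum]
    have hln : Real.log (n:ℝ) = Real.logb 2 n * Real.log 2 := by
      rw [Real.logb, div_mul_cancel₀]
      exact (Real.log_pos (by norm_num)).ne'
    rw [hln]
    rcases eq_or_ne (Real.logb 2 (n:ℝ)) 0 with h | h
    · rw [h]; simp
    · have h2 : Real.log 2 ≠ 0 := (Real.log_pos (by norm_num)).ne'
      field_simp
  constructor
  · simp only [hdig]
    have h := part2.const_mul (Real.log 2)
    rw [show Real.log 2 * (1/4) = Real.log 2 / 4 by ring] at h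
    exact Tendsto.congr (fun n => (hp n).symm) h
  · simp only [hdig]
    exact part2
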